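/- Let K be a field of characteristic zero, D ⊆ ℕ₀ⁿ, and M ⊆ D a subset such that for every subset J ⊆ {1,…,n}, every d ∈ D with supp(d) ⊆ J lies in the subgroup of ℤⁿ generated by M_J := { m ∈ M : supp(m) ⊆ J }. Then the monomials { x^m : m ∈ M } form a separating set for the algebra R = K[x^d : d ∈ D]: for any v, w ∈ Kⁿ, if x^d(v) ≠ x^d(w) for some d ∈ D, then x^m(v) ≠ x^m(w) for some m ∈ M. -/

import Mathlib

private lemma aux_zero_transfer (K : Type*) [Field K] (n : ℕ)
    (D M : Set (Fin n → ℕ))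
    (hyp : ∀ J : Set (Fin n), ∀ d ∈ D, {i | d i ≠ 0} ⊆ J →
      (fun i => ((d i : ℤ))) ∈ AddSubgroup.closure
        ((fun (m : Fin n → ℕ) i => (m i : ℤ)) '' {m | m ∈ M ∧ {i | m i ≠ 0} ⊆ J}))
    (v w : Fin n → K) (h : ∀ m ∈ M, (∏ i, v i ^ m i) = (∏ i, w i ^ m i))
    (d : Fin n → ℕ) (hd : d ∈ D) (i : Fin n) (hdi : d i ≠ 0) (hvi : v i = 0) :
    ∃ j, d j ≠ 0 ∧ w j = 0 := by
  by_contra hc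
  push_neg at hc
  have hmem := hyp {j | w j ≠ 0} d hd (fun j hj => hc j hj)
  have hle : AddSubgroup.closure
      ((fun (m : Fin n → ℕ) i => (m i : ℤ)) '' {m | m ∈ M ∧ {i | m i ≠ 0} ⊆ {j | w j ≠ 0}})
      ≤ (Pi.evalAddMonoidHom (fun _ => ℤ) i).ker := by
    rw [AddSubgroup.closure_le]
    rintro _ ⟨m, ⟨hmM, hmJ⟩, rfl⟩
    have hw : (∏ j, w j ^ m j) ≠ 0 := Finset.prod_ne_zero_iff.mpr (fun j _ => by
      by_cases hmj : m j = 0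
      · simp [hmj]
      · exact pow_ne_zero _ (hmJ hmj))
    have hv : (∏ j, v j ^ m j) ≠ 0 := (h m hmM) ▸ hw
    have hmi : m i = 0 := by
      by_contra hmi
      exact hv (Finset.prod_eq_zero (Finset.mem_univ i) (by rw [hvi]; exact zero_pow hmi))
    simp [AddMonoidHom.mem_ker, Pi.evalAddMonoidHom, hmi]
  have hdi' := hle hmem
  simp [AddMonoidHom.mem_ker, Pi.evalAddMonoidHom] at hdi'
  exact hdi hdi'

/-- in characteristic zero, if every `d ∈ D` with support in `J` lies
in the subgroup of ℤⁿ generated by `M_J`, for every `J`, then the monomials with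
exponents in `M` separate any pair of points separated by monomials with
exponents in `D`. -/
theorem monomials_separating_of_closure_char_zero
    (K : Type*) [Field K] [CharZero K] (n : ℕ)
    (D M : Set (Fin n → ℕ)) (hMD : M ⊆ D)
    (ι : (Fin n → ℕ) → (Fin n → ℤ)) (hι : ι = fun m i => (m i : ℤ))
    (hyp : ∀ J : Set (Fin n), ∀ d ∈ D, {i | d i ≠ 0} ⊆ J →
      ι d ∈ AddSubgroup.closure (ι '' {m | m ∈ M ∧ {i | m i ≠ 0} ⊆ J})) :
    ∀ v w : Fin n → K, (∃ d ∈ D, (∏ i, v i ^ d i) ≠ (∏ i, w i ^ d i)) →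
      ∃ m ∈ M, (∏ i, v i ^ m i) ≠ (∏ i, w i ^ m i) := by
  subst hι
  classical
  intro v w
  rw [← not_imp_not]
  push_neg
  intro h d hd
  by_cases hsupp : ∀ i, d i ≠ 0 → v i ≠ 0 ∧ w i ≠ 0
  · -- all relevant coordinates are nonzero; use the group-hom argument
    set J : Set (Fin n) := {i | v i ≠ 0 ∧ w i ≠ 0} with hJ
    have hdJ : {i | d i ≠ 0} ⊆ J := fun i hi => hsupp i hi
    have hmem := hyp J d hd hdJ
    let u : Fin n → Kˣ := fun i =>
      if hh : v i ≠ 0 ∧ w i ≠ 0 then Units.mk0 (v i) hh.1 / Units.mk0 (w i) hh.2 else 1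
    have hu : ∀ i ∈ J, ((u i : K)) = v i / w i := by
      intro i hi
      have hi' : v i ≠ 0 ∧ w i ≠ 0 := hi
      simp only [u]
      rw [dif_pos hi']
      simp
    let φ : (Fin n → ℤ) →+ Additive Kˣ :=
      { toFun := fun a => Additive.ofMul (∏ i, u i ^ a i)
        map_zero' := by simp
        map_add' := by
          intro a b
          simp only [Pi.add_apply, zpow_add, Finset.prod_mul_distrib]
          rfl }
    -- key computation: for exponents supported in J the product of units is the quotient
    have key : ∀ m : Fin n → ℕ, {i | m i ≠ 0} ⊆ J →
        ((∏ i, u i ^ (m i : ℤ) : Kˣ) : K) = (∏ i, v i ^ m i) / (∏ i, w i ^ m i) := by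
      intro m hmJ
      push_cast
      rw [← Finset.prod_div_distrib]
      refine Finset.prod_congr rfl (fun i _ => ?_)
      by_cases hmi : m i = 0
      · simp [hmi]
      · rw [zpow_natCast, hu i (hmJ hmi), div_pow]
    have hle : AddSubgroup.closure
        ((fun (m : Fin n → ℕ) i => (m i : ℤ)) '' {m | m ∈ M ∧ {i | m i ≠ 0} ⊆ J}) ≤ φ.ker := by
      rw [AddSubgroup.closure_le]
      rintro _ ⟨m, ⟨hmM, hmJ⟩, rfl⟩
      have hw : (∏ i, w i ^ m i) ≠ 0 := Finset.prod_ne_zero_iff.mpr (fun i _ => by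
        by_cases hmi : m i = 0
        · simp [hmi]
        · exact pow_ne_zero _ (hmJ hmi).2)
      have : ((∏ i, u i ^ (m i : ℤ) : Kˣ) : K) = 1 := by
        rw [key m hmJ, h m hmM, div_self hw]
      have h1 : (∏ i, u i ^ (m i : ℤ) : Kˣ) = 1 := Units.ext (by simpa using this)
      show φ _ = 0
      simp only [φ, AddMonoidHom.coe_mk, ZeroHom.coe_mk, h1]
      rfl
    have hk := hle hmem
    have h1 : ((∏ i, u i ^ ((d i : ℤ)) : Kˣ) : K) = 1 := by
      have : (∏ i, u i ^ ((d i : ℤ)) : Kˣ) = 1 := by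
        have := hk
        exact this
      rw [this]; simp
    rw [key d hdJ] at h1
    have hw : (∏ i, w i ^ d i) ≠ 0 := Finset.prod_ne_zero_iff.mpr (fun i _ => by
      by_cases hdi : d i = 0
      · simp [hdi]
      · exact pow_ne_zero _ (hdJ hdi).2)
    field_simp at h1
    exact h1
  · push_neg at hsupp
    obtain ⟨i, hdi, hvw⟩ := hsupp
    by_cases hvi : v i = 0
    · obtain ⟨j, hdj, hwj⟩ := aux_zero_transfer K n D M hyp v w h d hd i hdi hvi
      rw [Finset.prod_eq_zero (Finset.mem_univ i) (by rw [hvi]; exact zero_pow hdi),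
        Finset.prod_eq_zero (Finset.mem_univ j) (by rw [hwj]; exact zero_pow hdj)]
    · have hwi : w i = 0 := hvw hvi
      obtain ⟨j, hdj, hvj⟩ := aux_zero_transfer K n D M hyp w v
        (fun m hm => (h m hm).symm) d hd i hdi hwi
      rw [Finset.prod_eq_zero (Finset.mem_univ j) (by rw [hvj]; exact zero_pow hdj),
        Finset.prod_eq_zero (Finset.mem_univ i) (by rw [hwi]; exact zero_pow hdi)]
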